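/- Let v and z be real inner product spaces with a bilinear bracket [·,·] : v × v → z and maps J_Z : v → v satisfying ⟨J_Z U, W⟩ = ⟨Z, [U,W]⟩ and the generalized Heisenberg identities. Fix nonzero V ∈ v and Y ∈ z, and an orthonormal basis {e_{k+r}} of z. For each r write J_{e_{k+r}} J_Y V = V_r + J_{Y_r} V with V_r ∈ ker(ad(V)) and Y_r ∈ z (using the orthogonal decomposition v = ker(ad(V)) ⊕ J_z V). Then |V|²|Y|² δ_{rl} = ⟨V_r, V_l⟩ + |V|²⟨Y_r, Y_l⟩ for all r, l; consequently the Gram matrix (⟨V_r, V_l⟩) is positive semidefinite with all eigenvalues in [0, |V|²|Y|²]. -/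

import Mathlib

open scoped RealInnerProductSpace

private lemma gram_psd {E : Type*} [NormedAddCommGroup E] [InnerProductSpace ℝ E]
    {m : ℕ} (f : Fin m → E) :
    (Matrix.of fun r l => (⟪f r, f l⟫ : ℝ)).PosSemidef := by
  rw [Matrix.posSemidef_iff_dotProduct_mulVec]
  constructor
  · ext r l
    simp [Matrix.conjTranspose_apply, real_inner_comm]
  · intro x
    have h : dotProduct (star x) ((Matrix.of fun r l => (⟪f r, f l⟫ : ℝ)).mulVec x)
        = ⟪∑ r, x r • f r, ∑ l, x l • f l⟫ := by
      simp [Matrix.mulVec, dotProduct, inner_sum, sum_inner,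
        real_inner_smul_left, real_inner_smul_right, Finset.mul_sum, mul_comm, mul_assoc,
        mul_left_comm]
      rw [← real_inner_self_eq_norm_sq]
      simp only [inner_sum, sum_inner, real_inner_smul_left, real_inner_smul_right, Finset.mul_sum]
      exact Finset.sum_congr rfl fun r _ => Finset.sum_congr rfl fun l _ => by
        rw [real_inner_comm]
    rw [h]
    exact real_inner_self_nonneg

/-- In a generalized Heisenberg algebra `n = v ⊕ z`, fix nonzero `V ∈ v`, `Y ∈ z`
and an orthonormal basis `e` of `z`. Writing `J_{e r} J_Y V = V_r + J_{Y_r} V`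
with `V_r ∈ ker (ad V)`, one has `|V|²|Y|² δ_{rl} = ⟨V_r, V_l⟩ + |V|²⟨Y_r, Y_l⟩`;
consequently the Gram matrix `(⟨V_r, V_l⟩)` is positive semidefinite with all
eigenvalues in `[0, |V|²|Y|²]` (expressed as: `G` and `|V|²|Y|²·I − G` are both
positive semidefinite). -/
theorem stmt_19
    {v z : Type*} [NormedAddCommGroup v] [InnerProductSpace ℝ v]
    [NormedAddCommGroup z] [InnerProductSpace ℝ z]
    (br : v →ₗ[ℝ] v →ₗ[ℝ] z)
    (hbr : ∀ U W : v, br U W = - br W U)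
    (J : z →ₗ[ℝ] v →ₗ[ℝ] v)
    (hJ : ∀ (Z : z) (U W : v), ⟪J Z U, W⟫ = ⟪Z, br U W⟫)
    (hJ2 : ∀ (Z : z) (U : v), J Z (J Z U) = -(‖Z‖ ^ 2) • U)
    (V : v) (hV : V ≠ 0) (Y : z) (hY : Y ≠ 0)
    (m : ℕ) (e : Fin m → z) (he : Orthonormal ℝ e) (hebasis : ⊤ ≤ Submodule.span ℝ (Set.range e))
    (Vr : Fin m → v) (Yr : Fin m → z)
    (hVr : ∀ r, Vr r ∈ LinearMap.ker (br V))
    (hdec : ∀ r, J (e r) (J Y V) = Vr r + J (Yr r) V) :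
    (∀ r l, ‖V‖ ^ 2 * ‖Y‖ ^ 2 * (if r = l then 1 else 0) =
      ⟪Vr r, Vr l⟫ + ‖V‖ ^ 2 * ⟪Yr r, Yr l⟫) ∧
    (Matrix.of fun r l => ⟪Vr r, Vr l⟫).PosSemidef ∧
    ((‖V‖ ^ 2 * ‖Y‖ ^ 2) • (1 : Matrix (Fin m) (Fin m) ℝ) -
      Matrix.of fun r l => ⟪Vr r, Vr l⟫).PosSemidef := by
  -- skewness of J Z
  have hskew : ∀ (Z : z) (U W : v), ⟪J Z U, W⟫ = -⟪U, J Z W⟫ := by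
    intro Z U W
    have h2 : ⟪U, J Z W⟫ = ⟪Z, br W U⟫ := by rw [real_inner_comm]; exact hJ Z W U
    rw [hJ, h2, hbr W U, inner_neg_right, neg_neg]
  -- anticommutator
  have hanti : ∀ (Z W : z) (U : v), J Z (J W U) + J W (J Z U) = (-(2 * ⟪Z, W⟫)) • U := by
    intro Z W U
    have h1 := hJ2 (Z + W) U
    have h2 := hJ2 Z U
    have h3 := hJ2 W U
    have hn : ‖Z + W‖ ^ 2 = ‖Z‖ ^ 2 + 2 * ⟪Z, W⟫ + ‖W‖ ^ 2 := by
      rw [@norm_add_sq_real]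
    simp only [map_add, LinearMap.add_apply, hn] at h1
    have := h1
    rw [h2, h3] at this
    have hfin : J Z (J W U) + J W (J Z U)
        = -(‖Z‖ ^ 2 + 2 * ⟪Z, W⟫ + ‖W‖ ^ 2) • U - (-(‖Z‖ ^ 2) • U) - (-(‖W‖ ^ 2) • U) := by
      linear_combination (norm := module) this
    rw [hfin]
    module
  -- key inner-product identity
  have hkey : ∀ (Z W : z) (U : v), ⟪J Z U, J W U⟫ = ⟪Z, W⟫ * ‖U‖ ^ 2 := by
    intro Z W U
    have e1 : ⟪J Z U, J W U⟫ = -⟪U, J Z (J W U)⟫ := hskew Z U (J W U)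
    have e2 : ⟪J Z U, J W U⟫ = -⟪U, J W (J Z U)⟫ := by
      have h4 := hskew W (J Z U) U
      have h5 := real_inner_comm (J W (J Z U)) U
      have h6 := real_inner_comm (J Z U) (J W U)
      linarith
    have e3 : ⟪U, J Z (J W U) + J W (J Z U)⟫ = ⟪U, (-(2 * ⟪Z, W⟫)) • U⟫ := by
      rw [hanti]
    rw [inner_add_right, real_inner_smul_right, real_inner_self_eq_norm_sq] at e3
    nlinarith [e1, e2, e3]
  -- cross terms vanish
  have hcross : ∀ (r l : Fin m), ⟪Vr r, J (Yr l) V⟫ = 0 := by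
    intro r l
    rw [real_inner_comm, hJ]
    have h0 : br V (Vr r) = 0 := hVr r
    rw [h0, inner_zero_right]
  -- the main identity
  have hmain : ∀ r l, ‖V‖ ^ 2 * ‖Y‖ ^ 2 * (if r = l then 1 else 0) =
      ⟪Vr r, Vr l⟫ + ‖V‖ ^ 2 * ⟪Yr r, Yr l⟫ := by
    intro r l
    have hXnorm : ‖J Y V‖ ^ 2 = ‖Y‖ ^ 2 * ‖V‖ ^ 2 := by
      rw [← real_inner_self_eq_norm_sq, hkey, real_inner_self_eq_norm_sq]
    have hL : ⟪J (e r) (J Y V), J (e l) (J Y V)⟫ = ⟪e r, e l⟫ * ‖J Y V‖ ^ 2 :=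
      hkey _ _ _
    have hdelta : ⟪e r, e l⟫ = (if r = l then (1:ℝ) else 0) := by
      rcases orthonormal_iff_ite.mp he r l with h
      · exact h
    have hR : ⟪J (e r) (J Y V), J (e l) (J Y V)⟫
        = ⟪Vr r, Vr l⟫ + ‖V‖ ^ 2 * ⟪Yr r, Yr l⟫ := by
      rw [hdec r, hdec l, inner_add_left, inner_add_right, inner_add_right,
        hcross r l, hkey (Yr r) (Yr l) V]
      have : ⟪J (Yr r) V, Vr l⟫ = 0 := by
        rw [real_inner_comm]; exact hcross l r
      rw [this]
      ring
    rw [← hR, hL, hdelta, hXnorm]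
    ring
  refine ⟨hmain, gram_psd Vr, ?_⟩
  have heq : (‖V‖ ^ 2 * ‖Y‖ ^ 2) • (1 : Matrix (Fin m) (Fin m) ℝ) -
      (Matrix.of fun r l => ⟪Vr r, Vr l⟫)
      = Matrix.of fun r l => (⟪‖V‖ • Yr r, ‖V‖ • Yr l⟫ : ℝ) := by
    ext r l
    have h1 := hmain r l
    simp only [Matrix.sub_apply, Matrix.smul_apply, Matrix.one_apply, Matrix.of_apply,
      real_inner_smul_left, real_inner_smul_right, smul_eq_mul]
    linear_combination h1
  rw [heq]
  exact gram_psd _
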